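/- arXiv:2408.03984 — 5 statements merged into one kernel-verified Lean document; each statement's English description precedes it below -/
import Mathlib

section
/- Let A be a finite abelian group with nondegenerate symmetric bilinear form θ, and suppose v ∈ A satisfies θ(v,v)=0. Let n be the order of v, and let ⟨v⟩ be the cyclic subgroup generated by v. Then ⟨v⟩ ≤ ⟨v⟩⊥, the quotient A' = ⟨v⟩⊥/⟨v⟩ carries an induced nondegenerate symmetric bilinear form, and |A| = n² · |A'|. -/
/-- The orthogonal complement of a set `S` with respect to a bilinear form `θ`,
as a subgroup. -/
def perpSubgroup {A : Type*} [CommGroup A] (θ : A → A → Real.Angle)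
    (hbil : ∀ a b d : A, θ (a * b) d = θ a d + θ b d) (S : Set A) : Subgroup A where
  carrier := {a : A | ∀ b ∈ S, θ a b = 0}
  one_mem' := by
    intro b _
    have h := hbil 1 1 b
    rw [one_mul] at h
    exact left_eq_add.mp h
  mul_mem' := by
    intro a b ha hb d hd
    rw [hbil, ha d hd, hb d hd, add_zero]
  inv_mem' := by
    intro a ha d hd
    have h1 : θ 1 d = 0 := by
      have h := hbil 1 1 d
      rw [one_mul] at h
      exact left_eq_add.mp h
    have h := hbil a a⁻¹ d
    rw [mul_inv_cancel a, h1, ha d hd] at h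
    simpa using h.symm


open Real

noncomputable section

namespace CondensationAux

/-- coe eq zero iff -/
lemma angle_coe_eq_zero_iff (r : ℝ) : (r : Real.Angle) = 0 ↔ ∃ k : ℤ, r = 2 * π * k := by
  have := Real.Angle.angle_eq_iff_two_pi_dvd_sub (ψ := 0) (θ := r)
  simpa using this

lemma angle_prim (n : ℕ) (hn : n ≠ 0) :
    IsPrimitiveRoot (Multiplicative.ofAdd ((2 * π / n : ℝ) : Real.Angle)) n := by
  have hpow : ∀ (k : ℕ), (Multiplicative.ofAdd ((2 * π / n : ℝ) : Real.Angle)) ^ k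
      = Multiplicative.ofAdd (((k * (2 * π / n) : ℝ)) : Real.Angle) := by
    intro k
    rw [← ofAdd_nsmul, ← Real.Angle.coe_nsmul, nsmul_eq_mul]
  constructor
  · rw [hpow]
    have : ((n : ℝ) * (2 * π / n)) = 2 * π := by field_simp
    rw [this]
    simp [Real.Angle.coe_two_pi]
  · intro l hl
    rw [hpow] at hl
    have h0 : ((l * (2 * π / n) : ℝ) : Real.Angle) = 0 := by
      have := congrArg Multiplicative.toAdd hl
      simpa using this
    rw [angle_coe_eq_zero_iff] at h0
    obtain ⟨k, hk⟩ := h0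
    have hπ : (2 * π) ≠ 0 := by positivity
    have hn' : (n : ℝ) ≠ 0 := Nat.cast_ne_zero.mpr hn
    have h2 : (l : ℝ) * (2 * π) = (k : ℝ) * n * (2 * π) := by
      field_simp at hk
      rw [hk]; ring
    have h3 : (l : ℝ) = (k : ℝ) * n := mul_right_cancel₀ hπ h2
    have h4 : (l : ℤ) = k * n := by exact_mod_cast h3
    have : (n : ℤ) ∣ (l : ℤ) := Dvd.intro_left k h4.symm
    exact_mod_cast this

end CondensationAux

namespace Test
open CondensationAux

abbrev M := Multiplicative Real.Angle

lemma mem_zpowers_of_rootsOfUnity (n : ℕ) (hn : n ≠ 0) (u : Mˣ) (hu : u ∈ rootsOfUnity n M) :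
    ∃ k : ℤ, u = (toUnits (Multiplicative.ofAdd ((2 * π / n : ℝ) : Real.Angle))) ^ k := by
  rw [mem_rootsOfUnity] at hu
  have huv : (u : M) ^ n = 1 := by
    have := congrArg (Units.val) hu
    simpa using this
  obtain ⟨r, hr⟩ : ∃ r : ℝ, ((r : ℝ) : Real.Angle) = Multiplicative.toAdd (u : M) := by
    induction (Multiplicative.toAdd (u : M)) using Real.Angle.induction_on with
    | h x => exact ⟨x, rfl⟩
  have h0 : ((n * r : ℝ) : Real.Angle) = 0 := by
    have : (n : ℕ) • Multiplicative.toAdd (u : M) = 0 := by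
      have := congrArg Multiplicative.toAdd huv
      simpa [toAdd_pow] using this
    rw [← hr, ← Real.Angle.coe_nsmul, nsmul_eq_mul] at this
    exact this
  rw [angle_coe_eq_zero_iff] at h0
  obtain ⟨k, hk⟩ := h0
  have hn' : (n : ℝ) ≠ 0 := Nat.cast_ne_zero.mpr hn
  have hr2 : r = k * (2 * π / n) := by field_simp; nlinarith [hk]
  refine ⟨k, ?_⟩
  ext
  have : (u : M) = (Multiplicative.ofAdd ((2 * π / n : ℝ) : Real.Angle)) ^ k := by
    apply Multiplicative.toAdd.injective
    rw [← hr, hr2]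
    rw [toAdd_zpow]
    simp only [toAdd_ofAdd]
    rw [← Real.Angle.coe_zsmul]
    congr 1
    rw [zsmul_eq_mul]
  simpa using congrArg Multiplicative.toAdd this

instance hasEnough (n : ℕ) [NeZero n] : HasEnoughRootsOfUnity M n where
  prim := ⟨_, angle_prim n (NeZero.ne n)⟩
  cyc := by
    refine ⟨⟨⟨toUnits (Multiplicative.ofAdd ((2 * π / n : ℝ) : Real.Angle)), ?_⟩, ?_⟩⟩
    · rw [mem_rootsOfUnity]
      ext
      simpa using congrArg Multiplicative.toAdd (angle_prim n (NeZero.ne n)).pow_eq_one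
    · rintro ⟨u, hu⟩
      obtain ⟨k, hk⟩ := mem_zpowers_of_rootsOfUnity n (NeZero.ne n) u hu
      exact ⟨k, by ext; simp [hk]⟩

end Test

namespace Test2
open Test

variable {A : Type*} [CommGroup A] [Finite A]

lemma card_hom : Nat.card (A →* M) = Nat.card A := by
  haveI : NeZero (Monoid.exponent A) := ⟨Monoid.exponent_ne_zero_of_finite⟩
  obtain ⟨e⟩ := CommGroup.monoidHom_mulEquiv_of_hasEnoughRootsOfUnity A M
  have e2 : (A →* M) ≃* (A →* Mˣ) := MulEquiv.monoidHomCongrRight (toUnits)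
  exact Nat.card_congr (e2.toEquiv.trans e.toEquiv)

instance : DivisibleBy Real.Angle ℤ := by
  haveI : Fact (0 < 2 * π) := ⟨by positivity⟩
  exact inferInstanceAs (DivisibleBy (AddCircle (2 * π)) ℤ)

lemma exists_extension (S : Subgroup A) (f : S →* M) :
    ∃ g : A →* M, ∀ s : S, g s = f s := by
  have hBaer : Module.Baer ℤ Real.Angle := Module.Baer.of_divisible Real.Angle
  have hinj : Function.Injective (MonoidHom.toAdditive S.subtype) := by
    intro x y h
    have := congrArg Additive.toMul h
    exact Additive.toMul.injective (Subtype.ext (by simpa using this))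
  obtain ⟨h, hh⟩ := hBaer.extension_property_addMonoidHom
    (MonoidHom.toAdditive S.subtype) hinj (MonoidHom.toAdditiveLeft f)
  refine ⟨AddMonoidHom.toMultiplicativeRight h, fun s => ?_⟩
  have := congrArg (fun φ => φ (Additive.ofMul s)) hh
  simp only [AddMonoidHom.coe_comp, Function.comp_apply] at this
  apply Multiplicative.toAdd.injective
  simpa using this

end Test2

namespace Test3
open Test Test2

variable {A : Type*} [CommGroup A] [Fintype A]
  (θ : A → A → Real.Angle)
  (hsymm : ∀ a b : A, θ a b = θ b a)
  (hbil : ∀ a b d : A, θ (a * b) d = θ a d + θ b d)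

/-- the pairing as a character valued in M, in the second argument, for fixed first arg. -/
def chi (a : A) : A →* M :=
  MonoidHom.mk' (fun b => Multiplicative.ofAdd (θ a b))
    (fun b d => by
      show Multiplicative.ofAdd (θ a (b * d)) = Multiplicative.ofAdd (θ a b) * Multiplicative.ofAdd (θ a d)
      rw [hsymm a (b * d), hbil, hsymm b a, hsymm d a, ofAdd_add])

@[simp] lemma chi_apply (a b : A) : chi θ hsymm hbil a b = Multiplicative.ofAdd (θ a b) := rfl

/-- the pairing as a homomorphism A →* (A →* M). -/
def phi : A →* (A →* M) :=
  MonoidHom.mk' (chi θ hsymm hbil)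
    (fun a a' => by
      ext b
      simp only [chi_apply, MonoidHom.mul_apply, hbil, ofAdd_add])

variable (hnd : ∀ a : A, (∀ b : A, θ a b = 0) → a = 1)

lemma finite_hom {B : Type*} [CommGroup B] [Finite B] : Finite (B →* M) := by
  haveI : NeZero (Monoid.exponent B) := ⟨Monoid.exponent_ne_zero_of_finite⟩
  obtain ⟨e⟩ := CommGroup.monoidHom_mulEquiv_of_hasEnoughRootsOfUnity B M
  have e2 : (B →* M) ≃* (B →* Mˣ) := MulEquiv.monoidHomCongrRight (toUnits)
  exact Finite.of_equiv _ (e2.toEquiv.trans e.toEquiv).symm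

include hnd in
lemma phi_bijective : Function.Bijective (phi θ hsymm hbil) := by
  haveI : Finite (A →* M) := finite_hom
  rw [Nat.bijective_iff_injective_and_card]
  constructor
  · rw [injective_iff_map_eq_one]
    intro a ha
    refine hnd a fun b => ?_
    have := congrArg (fun f => Multiplicative.toAdd (f b)) ha
    simpa [phi] using this
  · exact (card_hom (A := A)).symm

/-- restriction to a subgroup as a homomorphism of character groups -/
def res (S : Subgroup A) : (A →* M) →* (S →* M) :=
  MonoidHom.mk' (fun g => g.comp S.subtype) (fun g g' => rfl)

lemma res_surjective (S : Subgroup A) : Function.Surjective (res (A := A) S) := by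
  intro f
  obtain ⟨g, hg⟩ := exists_extension S f
  exact ⟨g, MonoidHom.ext fun s => hg s⟩

include hsymm hnd in
lemma key (S : Subgroup A) :
    Nat.card A = Nat.card S * Nat.card (perpSubgroup θ hbil (S : Set A)) := by
  set Ψ : A →* (S →* M) := (res S).comp (phi θ hsymm hbil) with hΨ
  have hsurj : Function.Surjective Ψ :=
    (res_surjective S).comp (phi_bijective θ hsymm hbil hnd).surjective
  have hker : Ψ.ker = perpSubgroup θ hbil (S : Set A) := by
    ext a
    simp only [MonoidHom.mem_ker]
    constructor
    · intro h b hb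
      have := congrArg (fun f => Multiplicative.toAdd (f ⟨b, hb⟩)) h
      simpa [hΨ, res, phi] using this
    · intro h
      ext s
      have := h s s.2
      simp [hΨ, res, phi, chi, this]
  have h1 : Nat.card A = Nat.card (A ⧸ Ψ.ker) * Nat.card Ψ.ker :=
    Subgroup.card_eq_card_quotient_mul_card_subgroup _
  have h2 : Nat.card (A ⧸ Ψ.ker) = Nat.card (S →* M) :=
    Nat.card_congr (QuotientGroup.quotientKerEquivOfSurjective Ψ hsurj).toEquiv
  rw [h1, h2, card_hom, hker]

lemma eq_of_le_of_card' {H K : Subgroup A} (h : H ≤ K) (hc : Nat.card H = Nat.card K) : H = K := by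
  have e : Nat.card (H.subgroupOf K) = Nat.card H :=
    Nat.card_congr (Subgroup.subgroupOfEquivOfLe h).toEquiv
  have : H.subgroupOf K = ⊤ := by
    rw [← Subgroup.card_eq_iff_eq_top, e, hc]
  exact le_antisymm h (Subgroup.subgroupOf_eq_top.mp this)

include hsymm hnd in
lemma double_perp (S : Subgroup A) :
    perpSubgroup θ hbil ((perpSubgroup θ hbil (S : Set A) : Subgroup A) : Set A) = S := by
  set P : Subgroup A := perpSubgroup θ hbil (S : Set A) with hPdef
  have hle : S ≤ perpSubgroup θ hbil (P : Set A) := by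
    intro s hs b hb
    rw [hsymm]
    exact hb s hs
  have h1 := key θ hsymm hbil hnd S
  have h2 := key θ hsymm hbil hnd P
  have hPpos : 0 < Nat.card P := Nat.card_pos
  have hcard : Nat.card (perpSubgroup θ hbil (P : Set A)) = Nat.card S := by
    rw [h1] at h2
    have := Nat.eq_of_mul_eq_mul_left hPpos (by linarith [h2] : Nat.card P * Nat.card (perpSubgroup θ hbil (P : Set A)) = Nat.card P * Nat.card S)
    exact this
  exact (eq_of_le_of_card' hle hcard.symm).symm

include hsymm hbil in
lemma theta_zpow (a b : A) (j : ℤ) : θ (a ^ j) b = j • θ a b := by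
  have h := map_zpow (chi θ hsymm hbil b) a j
  have h2 : Multiplicative.ofAdd (θ b (a ^ j)) = Multiplicative.ofAdd (j • θ b a) := by
    rw [ofAdd_zsmul]
    exact h
  have := Multiplicative.ofAdd.injective h2
  rw [hsymm (a ^ j) b, this, hsymm b a]

end Test3



open CondensationAux Test Test3 in
/-- Condensing a boson `v` (an element with `θ(v,v) = 0`): the cyclic subgroup `⟨v⟩`
is contained in its complement `⟨v⟩⊥`, the quotient `A' = ⟨v⟩⊥/⟨v⟩` carries an induced
nondegenerate symmetric bilinear form, and `|A| = n² · |A'|` where `n` is the order of `v`. -/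
theorem condensation {A : Type*} [CommGroup A] [Fintype A]
    (θ : A → A → Real.Angle)
    (hsymm : ∀ a b : A, θ a b = θ b a)
    (hbil : ∀ a b d : A, θ (a * b) d = θ a d + θ b d)
    (hnd : ∀ a : A, (∀ b : A, θ a b = 0) → a = 1)
    (v : A) (hv : θ v v = 0)
    (P : Subgroup A)
    (hP : P = perpSubgroup θ hbil (Subgroup.zpowers v : Set A)) :
    Subgroup.zpowers v ≤ P ∧
    ∃ θ' : (P ⧸ (Subgroup.zpowers v).subgroupOf P) →
           (P ⧸ (Subgroup.zpowers v).subgroupOf P) → Real.Angle,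
      (∀ x y : P, θ' (QuotientGroup.mk x) (QuotientGroup.mk y) = θ (x : A) (y : A)) ∧
      (∀ x y, θ' x y = θ' y x) ∧
      (∀ x y z, θ' (x * y) z = θ' x z + θ' y z) ∧
      (∀ x, (∀ y, θ' x y = 0) → x = 1) ∧
      Nat.card A = (orderOf v) ^ 2 * Nat.card (P ⧸ (Subgroup.zpowers v).subgroupOf P) := by
  subst hP
  set S : Subgroup A := Subgroup.zpowers v with hSdef
  set P : Subgroup A := perpSubgroup θ hbil (S : Set A) with hPdef
  -- part 1
  have hle : S ≤ P := by
    rintro a ⟨j, rfl⟩ b hb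
    obtain ⟨k, rfl⟩ := hb
    show θ (v ^ j) (v ^ k) = 0
    rw [theta_zpow θ hsymm hbil, hsymm v (v ^ k), theta_zpow θ hsymm hbil, hv]
    simp
  refine ⟨hle, ?_⟩
  set H : Subgroup P := S.subgroupOf P with hHdef
  -- invariance
  have hinv : ∀ x y : P, (QuotientGroup.mk x : P ⧸ H) = QuotientGroup.mk y →
      ∀ c : P, θ (x : A) (c : A) = θ (y : A) (c : A) := by
    intro x y hxy c
    rw [QuotientGroup.eq] at hxy
    rw [Subgroup.mem_subgroupOf] at hxy
    obtain ⟨k, hk⟩ := hxy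
    have hy : (y : A) = (x : A) * v ^ k := by
      have : ((x⁻¹ * y : P) : A) = v ^ k := hk.symm
      push_cast at this
      rw [← this]
      group
    rw [hy, hbil]
    have hcv : θ (v ^ k) (c : A) = 0 := by
      rw [theta_zpow θ hsymm hbil, hsymm v c]
      rw [c.2 v ⟨1, by simp⟩]
      simp
    rw [hcv, add_zero]
  -- define θ'
  set θ' : (P ⧸ H) → (P ⧸ H) → Real.Angle :=
    fun x y => θ ((Quotient.out x : P) : A) ((Quotient.out y : P) : A) with hθ'def
  have hmk : ∀ x y : P, θ' (QuotientGroup.mk x) (QuotientGroup.mk y) = θ (x : A) (y : A) := by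
    intro x y
    have hx : (QuotientGroup.mk (Quotient.out (QuotientGroup.mk x : P ⧸ H)) : P ⧸ H)
        = QuotientGroup.mk x := QuotientGroup.out_eq' _
    have hy : (QuotientGroup.mk (Quotient.out (QuotientGroup.mk y : P ⧸ H)) : P ⧸ H)
        = QuotientGroup.mk y := QuotientGroup.out_eq' _
    rw [hθ'def]
    dsimp only
    rw [hinv _ _ hx _, hsymm, hinv _ _ hy _, hsymm]
  have hsurj : Function.Surjective (QuotientGroup.mk : P → P ⧸ H) := QuotientGroup.mk_surjective
  refine ⟨θ', hmk, ?_, ?_, ?_, ?_⟩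
  · intro x y
    obtain ⟨a, rfl⟩ := hsurj x
    obtain ⟨b, rfl⟩ := hsurj y
    rw [hmk, hmk, hsymm]
  · intro x y z
    obtain ⟨a, rfl⟩ := hsurj x
    obtain ⟨b, rfl⟩ := hsurj y
    obtain ⟨c, rfl⟩ := hsurj z
    rw [← QuotientGroup.mk_mul, hmk, hmk, hmk]
    push_cast
    rw [hbil]
  · intro x hx
    obtain ⟨a, rfl⟩ := hsurj x
    have haperp : (a : A) ∈ perpSubgroup θ hbil (P : Set A) := by
      intro b hb
      have := hx (QuotientGroup.mk ⟨b, hb⟩)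
      rwa [hmk] at this
    have hdp := double_perp θ hsymm hbil hnd S
    rw [hdp] at haperp
    rw [QuotientGroup.eq_one_iff]
    rwa [hHdef, Subgroup.mem_subgroupOf]
  · have h1 := key θ hsymm hbil hnd S
    have h2 : Nat.card P = Nat.card (P ⧸ H) * Nat.card H :=
      Subgroup.card_eq_card_quotient_mul_card_subgroup H
    have h3 : Nat.card H = Nat.card S :=
      Nat.card_congr (Subgroup.subgroupOfEquivOfLe hle).toEquiv
    have h4 : Nat.card S = orderOf v := Nat.card_zpowers v
    rw [h1, h2, h3, h4]
    ring
end
end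

section
/- Let A be a finite abelian group with a nondegenerate symmetric bilinear form θ, and let T : A → A be an automorphism with T² = id and θ(Ta, Tb) = −θ(a,b) for all a,b. Define f(a) = a·Ta and g(a) = a·(Ta)⁻¹. Then Im(f) is a subgroup of Ker(g), Ker(g) = Im(f)⊥, and Ker(f) = Im(g)⊥. -/
/-- For an involutive automorphism `T` reversing a nondegenerate symmetric bilinear form `θ`,
with `f(a) = a·Ta` and `g(a) = a·(Ta)⁻¹`: `Im(f) ⊆ Ker(g)`, `Ker(g) = Im(f)⊥`, and
`Ker(f) = Im(g)⊥`. -/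
theorem ker_eq_im_perp {A : Type*} [CommGroup A] [Fintype A]
    (θ : A → A → Real.Angle)
    (hsymm : ∀ a b : A, θ a b = θ b a)
    (hbil : ∀ a b d : A, θ (a * b) d = θ a d + θ b d)
    (hnd : ∀ a : A, (∀ b : A, θ a b = 0) → a = 1)
    (T : A → A)
    (hThom : ∀ a b : A, T (a * b) = T a * T b)
    (hT2 : ∀ a : A, T (T a) = a)
    (hTθ : ∀ a b : A, θ (T a) (T b) = - θ a b) :
    (∀ a : A, (a * T a) * (T (a * T a))⁻¹ = 1) ∧
    ({x : A | x * (T x)⁻¹ = 1} = {x : A | ∀ y : A, θ x (y * T y) = 0}) ∧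
    ({x : A | x * T x = 1} = {x : A | ∀ y : A, θ x (y * (T y)⁻¹) = 0}) := by
  have hone : ∀ b : A, θ 1 b = 0 := by
    intro b
    have h := hbil 1 1 b
    rw [one_mul] at h
    exact (left_eq_add.mp h)
  have hinv : ∀ a b : A, θ a⁻¹ b = - θ a b := by
    intro a b
    have h := hbil a⁻¹ a b
    rw [inv_mul_cancel, hone] at h
    exact eq_neg_of_add_eq_zero_left h.symm
  have hbil2 : ∀ a b d : A, θ a (b * d) = θ a b + θ a d := by
    intro a b d
    rw [hsymm, hbil, hsymm b a, hsymm d a]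
  have hinv2 : ∀ a b : A, θ a b⁻¹ = - θ a b := by
    intro a b
    rw [hsymm, hinv, hsymm]
  have hTx : ∀ a b : A, θ (T a) b = - θ a (T b) := by
    intro a b
    have := hTθ a (T b)
    rw [hT2] at this
    exact this
  refine ⟨?_, ?_, ?_⟩
  · intro a
    rw [hThom, hT2, mul_comm (T a) a]
    exact mul_inv_cancel _
  · ext x
    simp only [Set.mem_setOf_eq]
    constructor
    · intro hx y
      have hTxx : T x = x := by
        have := mul_inv_eq_one.mp hx
        exact this.symm
      rw [hbil2]
      have : θ x (T y) = - θ x y := by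
        calc θ x (T y) = θ (T x) (T y) := by rw [hTxx]
          _ = - θ x y := hTθ x y
      rw [this]
      exact add_neg_cancel _
    · intro hx
      apply hnd
      intro b
      rw [hbil, hinv]
      have h1 : θ (T x) b = - θ x (T b) := hTx x b
      rw [h1, neg_neg, ← hbil2]
      exact hx b
  · ext x
    simp only [Set.mem_setOf_eq]
    constructor
    · intro hx y
      have hTxx : T x = x⁻¹ := by
        exact eq_inv_of_mul_eq_one_right hx
      rw [hbil2, hinv2]
      have : θ x (T y) = θ x y := by
        calc θ x (T y) = θ (T y) x := hsymm _ _
          _ = - θ y (T x) := hTx y x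
          _ = - θ y x⁻¹ := by rw [hTxx]
          _ = - θ x⁻¹ y := by rw [hsymm]
          _ = θ x y := by rw [hinv, neg_neg]
      rw [this]
      exact add_neg_cancel _
    · intro hx
      apply hnd
      intro b
      rw [hbil]
      have h1 : θ (T x) b = - θ x (T b) := hTx x b
      rw [h1]
      have := hx b
      rw [hbil2, hinv2] at this
      exact this
end

section
/- Let A be a finite abelian group with a nondegenerate symmetric bilinear form θ : A × A → ℝ/2πℤ, a quadratic refinement θ_• : A → ℝ/2πℤ with θ(a,a) = 2θ_a, and an automorphism T with T² = id, θ(Ta,Tb) = −θ(a,b), and θ_{Ta} = −θ_a for all a,b ∈ A. Then |A| is a perfect square. -/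
/-! Auxiliary machinery: characters of finite abelian groups valued in `Real.Angle`. -/

abbrev MAngle := Multiplicative Real.Angle

instance fact_two_pi_pos : Fact (0 < 2*Real.pi) := ⟨by positivity⟩

noncomputable instance : DivisibleBy Real.Angle ℤ :=
  inferInstanceAs (DivisibleBy (AddCircle (2*Real.pi)) ℤ)

lemma angle_two_torsion' {x : Real.Angle} (h : x + x = 0) : x = 0 ∨ x = Real.pi := by
  rw [← Real.Angle.two_nsmul_eq_zero_iff, two_nsmul]; exact h

noncomputable def angleZeta (n : ℕ) : Real.Angle := ((2*Real.pi/n : ℝ) : Real.Angle)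

lemma angleZeta_orderOf (n : ℕ) (hn : 0 < n) :
    orderOf (Multiplicative.ofAdd (angleZeta n)) = n := by
  rw [orderOf_ofAdd_eq_addOrderOf]
  exact AddCircle.addOrderOf_period_div hn

lemma angle_torsion (n : ℕ) (hn : 0 < n) (x : Real.Angle) (hx : n • x = 0) :
    ∃ k : ℤ, x = k • angleZeta n := by
  induction x using Real.Angle.induction_on with
  | h t =>
    have h1 : ((n • t : ℝ) : Real.Angle) = ((0:ℝ) : Real.Angle) := by
      rw [Real.Angle.coe_nsmul]; simpa using hx
    rw [Real.Angle.angle_eq_iff_two_pi_dvd_sub] at h1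
    obtain ⟨k, hk⟩ := h1
    refine ⟨k, ?_⟩
    have hn' : (n : ℝ) ≠ 0 := by positivity
    have ht : t = (k : ℤ) • (2*Real.pi/n : ℝ) := by
      have : (n:ℝ) * t = 2 * Real.pi * k := by
        simpa [nsmul_eq_mul] using hk
      rw [zsmul_eq_mul, mul_div_assoc', eq_div_iff hn']
      linarith [this]
    rw [angleZeta, ← Real.Angle.coe_zsmul, ← ht]

instance hasEnoughMAngle (n : ℕ) [NeZero n] : HasEnoughRootsOfUnity MAngle n where
  prim := by
    have hn : 0 < n := Nat.pos_of_ne_zero (NeZero.ne n)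
    refine ⟨Multiplicative.ofAdd (angleZeta n), ?_⟩
    have h := IsPrimitiveRoot.orderOf (Multiplicative.ofAdd (angleZeta n))
    rwa [angleZeta_orderOf n hn] at h
  cyc := by
    have hn : 0 < n := Nat.pos_of_ne_zero (NeZero.ne n)
    set ζ : MAngle := Multiplicative.ofAdd (angleZeta n) with hζ
    have hζn : ζ ^ n = 1 := by
      have := angleZeta_orderOf n hn
      rw [← this]; exact pow_orderOf_eq_one _
    have hmem : (toUnits ζ) ∈ rootsOfUnity n MAngle := by
      rw [mem_rootsOfUnity]
      ext
      exact congrArg Multiplicative.toAdd hζn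
    constructor
    refine ⟨⟨toUnits ζ, hmem⟩, fun y => ?_⟩
    obtain ⟨x, hx⟩ := y
    rw [mem_rootsOfUnity] at hx
    have hxval : ((x : MAngle)) ^ n = 1 := by exact_mod_cast congrArg Units.val hx
    obtain ⟨k, hk⟩ := angle_torsion n hn (Multiplicative.toAdd (x : MAngle)) (by
      apply Multiplicative.ofAdd.injective
      simpa [ofAdd_nsmul] using hxval)
    refine Subgroup.mem_zpowers_iff.mpr ⟨k, ?_⟩
    ext
    show (((toUnits ζ : MAngleˣ) ^ k : MAngleˣ) : MAngle) = ((x : MAngleˣ) : MAngle)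
    rw [Units.val_zpow_eq_zpow_val, val_toUnits_apply]
    apply Multiplicative.toAdd.injective
    simpa [hζ] using hk.symm

/-- Extension of `Real.Angle`-valued characters from subgroups. -/
lemma ext_char {A : Type*} [CommGroup A] (H : Subgroup A) (f : ↥H →* MAngle) :
    ∃ g : A →* MAngle, ∀ h : ↥H, g h.1 = f h := by
  have hBaer : Module.Baer ℤ Real.Angle := Module.Baer.of_divisible _
  obtain ⟨G, hG⟩ := hBaer.extension_property_addMonoidHom
    (MonoidHom.toAdditive H.subtype) (fun u v huv => H.subtype_injective (by exact_mod_cast huv))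
    (MonoidHom.toAdditiveLeft f)
  refine ⟨MonoidHom.toAdditiveLeft.symm G, fun h => ?_⟩
  exact congrArg Multiplicative.ofAdd (DFunLike.congr_fun hG (Additive.ofMul h))

noncomputable def charEquiv (G : Type*) [CommGroup G] [Finite G] : (G →* MAngle) ≃ G := by
  haveI : NeZero (Monoid.exponent G) := ⟨Monoid.exponent_ne_zero_of_finite⟩
  have e := (CommGroup.monoidHom_mulEquiv_of_hasEnoughRootsOfUnity G MAngle).some
  exact ((MulEquiv.monoidHomCongrRight (toUnits (G := MAngle))).trans e).toEquiv

lemma finite_char (G : Type*) [CommGroup G] [Finite G] : Finite (G →* MAngle) :=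
  Finite.of_equiv G (charEquiv G).symm

lemma card_char (G : Type*) [CommGroup G] [Finite G] :
    Nat.card (G →* MAngle) = Nat.card G :=
  Nat.card_congr (charEquiv G)

/-- Orthogonal-complement counting for a nondegenerate symmetric bilinear form. -/
lemma orth {A : Type*} [CommGroup A] [Fintype A] (θ : A → A → Real.Angle)
    (hsymm : ∀ a b : A, θ a b = θ b a)
    (hbil : ∀ a b d : A, θ (a * b) d = θ a d + θ b d)
    (hnd : ∀ a : A, (∀ b : A, θ a b = 0) → a = 1)
    (H P : Subgroup A)
    (hP : ∀ a, a ∈ P ↔ ∀ h ∈ H, θ a h = 0) :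
    Nat.card P * Nat.card H = Nat.card A := by
  have hθ1 : ∀ b, θ 1 b = 0 := fun b => by
    have h := hbil 1 1 b; rw [one_mul] at h; exact (left_eq_add.mp h)
  have hbil' : ∀ a b d : A, θ a (b * d) = θ a b + θ a d := fun a b d => by
    rw [hsymm, hbil, hsymm b a, hsymm d a]
  let χ : ∀ _ : A, A →* MAngle := fun a => MonoidHom.mk'
    (fun b => Multiplicative.ofAdd (θ a b)) (fun b c => by
      rw [← ofAdd_add]; exact congrArg Multiplicative.ofAdd (hbil' a b c))
  haveI : Finite (A →* MAngle) := finite_char A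
  haveI : Finite (↥H →* MAngle) := finite_char ↥H
  let Ξ : A →* (A →* MAngle) := MonoidHom.mk' χ (fun a b => by
    ext c
    show Multiplicative.ofAdd (θ (a*b) c)
      = Multiplicative.ofAdd (θ a c) * Multiplicative.ofAdd (θ b c)
    rw [← ofAdd_add]; exact congrArg Multiplicative.ofAdd (hbil a b c))
  have hΞinj : Function.Injective Ξ := by
    rw [injective_iff_map_eq_one]
    intro a ha
    refine hnd a (fun b => ?_)
    have := DFunLike.congr_fun ha b
    exact Multiplicative.ofAdd.injective this
  have hΞsurj : Function.Surjective Ξ :=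
    ((Nat.bijective_iff_injective_and_card Ξ).mpr ⟨hΞinj, (card_char A).symm⟩).2
  let Φ : A →* (↥H →* MAngle) := MonoidHom.mk' (fun a => (χ a).comp H.subtype) (fun a b => by
    ext c
    show Multiplicative.ofAdd (θ (a*b) c)
      = Multiplicative.ofAdd (θ a c) * Multiplicative.ofAdd (θ b c)
    rw [← ofAdd_add]; exact congrArg Multiplicative.ofAdd (hbil a b c))
  have hker : Φ.ker = P := by
    ext a
    simp only [MonoidHom.mem_ker]
    constructor
    · intro ha
      rw [hP]
      intro h hh
      have := DFunLike.congr_fun ha ⟨h, hh⟩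
      exact Multiplicative.ofAdd.injective this
    · intro ha
      ext h
      exact congrArg Multiplicative.ofAdd ((hP a).mp ha h.1 h.2)
  have hsurj : Function.Surjective Φ := by
    intro f
    obtain ⟨g, hg⟩ := ext_char H f
    obtain ⟨a, ha⟩ := hΞsurj g
    refine ⟨a, ?_⟩
    ext h
    show (χ a) h.1 = f h
    rw [show χ a = g from ha]
    exact hg h
  have hrange : Φ.range = ⊤ := MonoidHom.range_eq_top.mpr hsurj
  have h1 : Nat.card A = Nat.card (A ⧸ Φ.ker) * Nat.card Φ.ker :=
    Subgroup.card_eq_card_quotient_mul_card_subgroup Φ.ker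
  have h2 : Nat.card (A ⧸ Φ.ker) = Nat.card (↥H →* MAngle) := by
    rw [Nat.card_congr (QuotientGroup.quotientKerEquivRange Φ).toEquiv, hrange]
    exact Nat.card_congr Subgroup.topEquiv.toEquiv
  rw [h1, h2, card_char ↥H, hker, mul_comm]

universe u

/-- A finite abelian group with a symmetric bilinear alternating `Real.Angle`-valued
form, all of whose values are `2`-torsion, has cardinality a square times the
cardinality of the radical of the form. -/
lemma symp_aux : ∀ (n : ℕ) (G : Type u) (_ : CommGroup G) (_ : Finite G)
    (B : G → G → Real.Angle),
    (∀ x y, B x y = B y x) → (∀ x y z, B (x*y) z = B x z + B y z) →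
    (∀ x, B x x = 0) → (∀ x y, B (x*x) y = 0) →
    Nat.card G ≤ n →
    ∃ l : ℕ, Nat.card G = l^2 * Nat.card {x : G // ∀ y, B x y = 0} := by
  intro n
  induction n with
  | zero =>
    intro G _ _ B _ _ _ _ hle
    exact absurd hle (by have := Nat.card_pos (α := G); omega)
  | succ n ih =>
    intro G _ _ B hsymm hbil halt h2 hle
    have hbil' : ∀ x y z : G, B x (y*z) = B x y + B x z := fun x y z => by
      rw [hsymm, hbil, hsymm y x, hsymm z x]
    have hB1 : ∀ y, B 1 y = 0 := fun y => by
      have h := hbil 1 1 y; rw [one_mul] at h; exact (left_eq_add.mp h)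
    have hB1' : ∀ x, B x 1 = 0 := fun x => by rw [hsymm]; exact hB1 x
    have hBinv : ∀ x y, B x y⁻¹ = - B x y := fun x y => by
      have h := hbil' x y y⁻¹; rw [mul_inv_cancel, hB1'] at h
      exact (neg_eq_of_add_eq_zero_right h.symm).symm
    have h2t : ∀ x y : G, B x y = 0 ∨ B x y = Real.pi := fun x y => by
      apply angle_two_torsion'
      have h := h2 x y; rw [hbil] at h; exact h
    by_cases htriv : ∀ x y : G, B x y = 0
    · refine ⟨1, ?_⟩
      rw [one_pow, one_mul]
      exact (Nat.card_congr (Equiv.subtypeUnivEquiv (fun x => htriv x))).symm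
    · push_neg at htriv
      obtain ⟨x, y, hxy⟩ := htriv
      have hBxy : B x y = Real.pi := (h2t x y).resolve_left hxy
      have hByx : B y x = Real.pi := by rw [hsymm]; exact hBxy
      set Hsub : Subgroup G :=
        { carrier := {z | B x z = 0 ∧ B y z = 0}
          one_mem' := ⟨hB1' x, hB1' y⟩
          mul_mem' := fun {a b} ha hb => by
            refine ⟨?_, ?_⟩ <;> rw [hbil']
            · rw [ha.1, hb.1, add_zero]
            · rw [ha.2, hb.2, add_zero]
          inv_mem' := fun {a} ha => by
            refine ⟨?_, ?_⟩ <;> rw [hBinv]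
            · rw [ha.1, neg_zero]
            · rw [ha.2, neg_zero] } with hHsub
      set Φ : Bool × Bool × ↥Hsub → G :=
        fun t => (cond t.1 x 1) * (cond t.2.1 y 1) * (t.2.2 : G) with hΦ
      have hval_y : ∀ (a b : Bool) (h : ↥Hsub), B (Φ (a,b,h)) y = (cond a Real.pi 0) := by
        intro a b h
        rw [hΦ]
        simp only
        rw [hbil, hbil]
        have h1 : B (h : G) y = 0 := by rw [hsymm]; exact h.2.2
        have h2 : B (cond b y 1) y = 0 := by cases b <;> simp [hB1, halt]
        rw [h1, h2, add_zero, add_zero]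
        cases a <;> simp [hB1, hBxy]
      have hval_x : ∀ (a b : Bool) (h : ↥Hsub), B (Φ (a,b,h)) x = (cond b Real.pi 0) := by
        intro a b h
        rw [hΦ]
        simp only
        rw [hbil, hbil]
        have h1 : B (h : G) x = 0 := by rw [hsymm]; exact h.2.1
        have h2 : B (cond a x 1) x = 0 := by cases a <;> simp [hB1, halt]
        rw [h1, h2, add_zero, zero_add]
        cases b <;> simp [hB1, hByx]
      have hΦbij : Function.Bijective Φ := by
        constructor
        · rintro ⟨a, b, h⟩ ⟨a', b', h'⟩ heq
          have ha : a = a' := by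
            have e1 := hval_y a b h
            have e2 := hval_y a' b' h'
            rw [heq, e2] at e1
            cases a <;> cases a' <;>
              first
                | rfl
                | exact absurd e1 Real.Angle.pi_ne_zero
                | exact absurd e1.symm Real.Angle.pi_ne_zero
          have hb : b = b' := by
            have e1 := hval_x a b h
            have e2 := hval_x a' b' h'
            rw [heq, e2] at e1
            cases b <;> cases b' <;>
              first
                | rfl
                | exact absurd e1 Real.Angle.pi_ne_zero
                | exact absurd e1.symm Real.Angle.pi_ne_zero
          subst ha; subst hb
          rw [hΦ] at heq
          simp only at heq
          exact Prod.ext rfl (Prod.ext rfl (Subtype.ext (mul_left_cancel heq)))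
        · intro g
          rcases h2t x g with hgx|hgx <;> rcases h2t y g with hgy|hgy
          · exact ⟨(false, false, ⟨g, ⟨hgx, hgy⟩⟩), by simp [hΦ]⟩
          · refine ⟨(true, false, ⟨x⁻¹ * g, ?_, ?_⟩), ?_⟩
            · rw [hbil', hBinv, halt, hgx]; simp
            · rw [hbil', hBinv, hByx, hgy]; simp
            · show x * 1 * (x⁻¹ * g) = g
              rw [mul_one, mul_inv_cancel_left]
          · refine ⟨(false, true, ⟨y⁻¹ * g, ?_, ?_⟩), ?_⟩
            · rw [hbil', hBinv, hBxy, hgx]; simp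
            · rw [hbil', hBinv, halt, hgy]; simp
            · show 1 * y * (y⁻¹ * g) = g
              rw [one_mul, mul_inv_cancel_left]
          · refine ⟨(true, true, ⟨x⁻¹ * (y⁻¹ * g), ?_, ?_⟩), ?_⟩
            · rw [hbil', hBinv, hbil', hBinv, halt, hBxy, hgx]; simp
            · rw [hbil', hBinv, hbil', hBinv, halt, hByx, hgy]; simp
            · show x * y * (x⁻¹ * (y⁻¹ * g)) = g
              rw [mul_comm x y, mul_assoc, mul_inv_cancel_left, mul_inv_cancel_left]
      have hcard4 : Nat.card G = 4 * Nat.card ↥Hsub := by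
        have := Nat.card_eq_of_bijective Φ hΦbij
        rw [← this, Nat.card_prod, Nat.card_prod, Nat.card_eq_fintype_card (α := Bool),
          Fintype.card_bool]
        ring
      have hHle : Nat.card ↥Hsub ≤ n := by
        have hpos := Nat.card_pos (α := ↥Hsub)
        omega
      obtain ⟨l, hl⟩ := ih ↥Hsub inferInstance inferInstance
        (fun u v => B u v)
        (fun u v => hsymm u v) (fun u v w => hbil u v w)
        (fun u => halt u) (fun u v => h2 u v) hHle
      have hradmem : ∀ (u : ↥Hsub), (∀ v : ↥Hsub, B u v = 0) → ∀ z : G, B u z = 0 := by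
        intro u hu z
        obtain ⟨⟨a, b, h⟩, rfl⟩ := hΦbij.2 z
        rw [hΦ]
        simp only
        rw [hbil', hbil']
        have e1 : B (u : G) (cond a x 1) = 0 := by
          cases a
          · simp [hB1']
          · simp only [cond]; rw [hsymm]; exact u.2.1
        have e2 : B (u : G) (cond b y 1) = 0 := by
          cases b
          · simp [hB1']
          · simp only [cond]; rw [hsymm]; exact u.2.2
        rw [e1, e2, hu h]
        simp
      have hradeq : Nat.card {u : ↥Hsub // ∀ v : ↥Hsub, B u v = 0}
          = Nat.card {z : G // ∀ w : G, B z w = 0} := by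
        refine Nat.card_congr ⟨fun u => ⟨u.1.1, hradmem u.1 u.2⟩,
          fun z => ⟨⟨z.1, ⟨?_, ?_⟩⟩, fun v => ?_⟩, fun u => ?_, fun z => ?_⟩
        · rw [hsymm]; exact z.2 x
        · rw [hsymm]; exact z.2 y
        · exact z.2 v.1
        · rfl
        · rfl
      refine ⟨2 * l, ?_⟩
      rw [hcard4, hl, ← hradeq]
      ring

/-- A time-reversal invariant abelian bosonic topological order has anyon count a
perfect square: a finite abelian group with nondegenerate symmetric bilinear form `θ`,
quadratic refinement (topological spin) `θs` with `θ(a,a) = 2θs a` and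
`θs (ab) = θs a + θs b + θ(a,b)`, and an automorphism `T` with `T² = id`,
`θ(Ta,Tb) = −θ(a,b)`, `θs (Ta) = −θs a`, has `|A| = l²`. -/
theorem card_sq_of_time_reversal {A : Type*} [CommGroup A] [Fintype A]
    (θ : A → A → Real.Angle) (θs : A → Real.Angle)
    (hsymm : ∀ a b : A, θ a b = θ b a)
    (hbil : ∀ a b d : A, θ (a * b) d = θ a d + θ b d)
    (hnd : ∀ a : A, (∀ b : A, θ a b = 0) → a = 1)
    (hquad : ∀ a : A, θ a a = θs a + θs a)
    (hrel : ∀ a b : A, θs (a * b) = θs a + θs b + θ a b)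
    (T : A → A)
    (hThom : ∀ a b : A, T (a * b) = T a * T b)
    (hT2 : ∀ a : A, T (T a) = a)
    (hTθ : ∀ a b : A, θ (T a) (T b) = - θ a b)
    (hTs : ∀ a : A, θs (T a) = - θs a) :
    ∃ l : ℕ, Nat.card A = l ^ 2 := by
  classical
  -- basic consequences
  have hθ1 : ∀ b, θ 1 b = 0 := fun b => by
    have h := hbil 1 1 b; rw [one_mul] at h; exact (left_eq_add.mp h)
  have hθ1' : ∀ a, θ a 1 = 0 := fun a => by rw [hsymm]; exact hθ1 a
  have hbil2 : ∀ a b d : A, θ a (b * d) = θ a b + θ a d := fun a b d => by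
    rw [hsymm, hbil, hsymm b a, hsymm d a]
  have hθinv : ∀ a b, θ a⁻¹ b = - θ a b := fun a b => by
    have h := hbil a a⁻¹ b
    rw [mul_inv_cancel, hθ1] at h
    exact eq_neg_of_add_eq_zero_right h.symm
  have hθinv' : ∀ a b, θ a b⁻¹ = - θ a b := fun a b => by
    rw [hsymm, hθinv, hsymm]
  have hT1 : T 1 = 1 := by
    have h := hThom 1 1; rw [one_mul] at h; exact (left_eq_mul.mp h)
  have hTinv : ∀ a, T a⁻¹ = (T a)⁻¹ := fun a => by
    have h : T a * T a⁻¹ = 1 := by rw [← hThom, mul_inv_cancel, hT1]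
    exact eq_inv_of_mul_eq_one_right h
  have hTθ' : ∀ a b, θ (T a) b = - θ a (T b) := fun a b => by
    have h := hTθ a (T b); rwa [hT2 b] at h
  have hs1 : θs 1 = 0 := by
    have h := hrel 1 1
    rw [one_mul, hθ1, add_zero] at h
    exact (left_eq_add.mp h)
  have hsinv : ∀ a, θs a⁻¹ = θs a := fun a => by
    have h := hrel a a⁻¹
    rw [mul_inv_cancel, hs1, hθinv', hquad] at h
    have h2 : (0:Real.Angle) = θs a⁻¹ - θs a :=
      h.trans (by abel)
    exact sub_eq_zero.mp h2.symm
  -- the two canonical homomorphisms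
  let ψ : A →* A := MonoidHom.mk' (fun a => a * T a) (fun a b => by
    show (a*b) * T (a*b) = (a * T a) * (b * T b)
    rw [hThom, mul_mul_mul_comm])
  let φm : A →* A := MonoidHom.mk' (fun a => a * (T a)⁻¹) (fun a b => by
    show (a*b) * (T (a*b))⁻¹ = (a * (T a)⁻¹) * (b * (T b)⁻¹)
    rw [hThom, mul_inv, mul_mul_mul_comm])
  have memK : ∀ a, a ∈ ψ.ker ↔ T a = a⁻¹ := fun a => by
    rw [MonoidHom.mem_ker]
    show a * T a = 1 ↔ _
    constructor
    · intro h; exact eq_inv_of_mul_eq_one_right h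
    · intro h; rw [h, mul_inv_cancel]
  have memF : ∀ a, a ∈ φm.ker ↔ T a = a := fun a => by
    rw [MonoidHom.mem_ker]
    show a * (T a)⁻¹ = 1 ↔ _
    constructor
    · intro h
      exact inv_injective (eq_inv_of_mul_eq_one_right h)
    · intro h; rw [h, mul_inv_cancel]
  -- key adjunction identities
  have key1 : ∀ b a, θ b (ψ a) = θ (φm b) a := fun b a => by
    show θ b (a * T a) = θ (b * (T b)⁻¹) a
    rw [hbil2, hbil, hθinv]
    congr 1
    rw [hsymm b (T a), hTθ' a b, hsymm a (T b)]
  have key2 : ∀ b a, θ b (φm a) = θ (ψ b) a := fun b a => by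
    show θ b (a * (T a)⁻¹) = θ (b * T b) a
    rw [hbil2, hbil, hθinv']
    congr 1
    rw [hsymm b (T a), hTθ' a b, hsymm a (T b), neg_neg]
  -- Lagrange for the two homomorphisms
  have cardψ : Nat.card A = Nat.card ψ.range * Nat.card ψ.ker := by
    rw [Subgroup.card_eq_card_quotient_mul_card_subgroup ψ.ker]
    congr 1
    exact Nat.card_congr (QuotientGroup.quotientKerEquivRange ψ).toEquiv
  have cardφ : Nat.card A = Nat.card φm.range * Nat.card φm.ker := by
    rw [Subgroup.card_eq_card_quotient_mul_card_subgroup φm.ker]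
    congr 1
    exact Nat.card_congr (QuotientGroup.quotientKerEquivRange φm).toEquiv
  -- orthogonality
  have hFperp : ∀ a, a ∈ φm.ker ↔ ∀ h ∈ ψ.range, θ a h = 0 := fun a => by
    constructor
    · rintro ha h ⟨b, rfl⟩
      rw [key1, show φm a = 1 from ha, hθ1]
    · intro ha
      rw [MonoidHom.mem_ker]
      apply hnd
      intro b
      have h := ha (ψ b) ⟨b, rfl⟩
      rwa [key1] at h
  have o1 := orth θ hsymm hbil hnd ψ.range φm.ker hFperp
  have hKperp : ∀ a, a ∈ ψ.ker ↔ ∀ h ∈ φm.range, θ a h = 0 := fun a => by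
    constructor
    · rintro ha h ⟨b, rfl⟩
      rw [key2, show ψ a = 1 from ha, hθ1]
    · intro ha
      rw [MonoidHom.mem_ker]
      apply hnd
      intro b
      have h := ha (φm b) ⟨b, rfl⟩
      rwa [key2] at h
  have o2 := orth θ hsymm hbil hnd φm.range ψ.ker hKperp
  have posK : 0 < Nat.card ψ.ker := Nat.card_pos
  have posIψ : 0 < Nat.card ψ.range := Nat.card_pos
  -- |F| = |K|
  have hFK : Nat.card φm.ker = Nat.card ψ.ker := by
    have h1 : Nat.card ψ.range * Nat.card φm.ker
        = Nat.card ψ.range * Nat.card ψ.ker := by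
      rw [mul_comm (Nat.card ψ.range) (Nat.card φm.ker), o1, cardψ]
    exact Nat.eq_of_mul_eq_mul_left posIψ h1
  -- |Iφ| = |Iψ|
  have hII : Nat.card φm.range = Nat.card ψ.range := by
    have h1 : Nat.card φm.range * Nat.card ψ.ker
        = Nat.card ψ.range * Nat.card ψ.ker := by
      rw [← hFK, ← cardφ, cardψ, hFK]
    exact Nat.eq_of_mul_eq_mul_right posK h1
  -- the orthogonal complement of K
  let perpK : Subgroup A :=
    { carrier := {a | ∀ h ∈ ψ.ker, θ a h = 0}
      one_mem' := fun h _ => hθ1 h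
      mul_mem' := fun {a b} ha hb h hh => by rw [hbil, ha h hh, hb h hh, add_zero]
      inv_mem' := fun {a} ha h hh => by rw [hθinv, ha h hh, neg_zero] }
  have o3 := orth θ hsymm hbil hnd ψ.ker perpK (fun a => Iff.rfl)
  have hIφK : φm.range ≤ ψ.ker := by
    rintro _ ⟨c, rfl⟩
    rw [memK]
    show T (c * (T c)⁻¹) = (c * (T c)⁻¹)⁻¹
    rw [hThom, hTinv, hT2, mul_inv, inv_inv, mul_comm]
  have hIφperp : φm.range ≤ perpK := by
    rintro _ ⟨c, rfl⟩ h hh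
    rw [hsymm, key2, show ψ h = 1 from hh, hθ1]
  have cardperp : Nat.card perpK = Nat.card φm.range := by
    have h1 : Nat.card perpK * Nat.card ψ.ker
        = Nat.card φm.range * Nat.card ψ.ker := by
      rw [o3, mul_comm (Nat.card φm.range), o2]
    exact Nat.eq_of_mul_eq_mul_right posK h1
  have hIφeq : φm.range = perpK :=
    Subgroup.eq_of_le_of_card_ge hIφperp (le_of_eq cardperp)
  -- the alternating form on K
  have hK2tors : ∀ u : ↥ψ.ker, θs (u : A) + θs (u : A) = 0 := by
    intro u
    have hTu : T (u : A) = (u : A)⁻¹ := (memK _).mp u.2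
    have h1 : θs ((u:A)⁻¹) = - θs (u:A) := by rw [← hTu]; exact hTs _
    rw [hsinv] at h1
    nth_rewrite 2 [h1]
    exact add_neg_cancel _
  have halt : ∀ u : ↥ψ.ker, θ (u : A) (u : A) = 0 := fun u => by
    rw [hquad]; exact hK2tors u
  have hsq : ∀ u : ↥ψ.ker, (u : A) * (u : A) = φm (u : A) := fun u => by
    show _ = (u:A) * (T (u:A))⁻¹
    rw [(memK _).mp u.2, inv_inv]
  have h2 : ∀ u v : ↥ψ.ker, θ ((u : A) * (u : A)) (v : A) = 0 := fun u v => by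
    rw [hsq, hsymm, key2, show ψ (v : A) = 1 from v.2, hθ1]
  obtain ⟨l, hl⟩ := symp_aux (Nat.card ↥ψ.ker) ↥ψ.ker inferInstance inferInstance
    (fun u v => θ u v)
    (fun u v => hsymm u v) (fun u v w => hbil u v w)
    halt h2 le_rfl
  -- identify the radical with the image of φm
  have hrad : Nat.card {u : ↥ψ.ker // ∀ v : ↥ψ.ker, θ (u : A) (v : A) = 0}
      = Nat.card ↥φm.range := by
    refine Nat.card_congr ⟨fun u => ⟨u.1.1, ?_⟩, fun a => ⟨⟨a.1, hIφK a.2⟩, fun v => ?_⟩,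
      fun u => ?_, fun a => ?_⟩
    · rw [hIφeq]
      exact fun h hh => u.2 ⟨h, hh⟩
    · have := hIφperp a.2
      exact this v.1 v.2
    · rfl
    · rfl
  refine ⟨l * Nat.card φm.range, ?_⟩
  rw [cardψ, ← hII, hl, hrad]
  ring
end

section
/- Let A be a finite abelian group with nondegenerate symmetric bilinear form θ and automorphism T with T²=id and θ(Ta,Tb)=−θ(a,b). If a ∈ A has order n and θ(a,Ta) = π (in ℝ/2πℤ), then n is even. -/
/-- If `a` has order `n` and `θ(a, Ta) = π` for an involutive automorphism `T` negating
the nondegenerate symmetric bilinear form `θ`, then `n` is even. -/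
theorem even_order_of_pi_braiding {A : Type*} [CommGroup A] [Fintype A]
    (θ : A → A → Real.Angle)
    (hsymm : ∀ a b : A, θ a b = θ b a)
    (hbil : ∀ a b d : A, θ (a * b) d = θ a d + θ b d)
    (hnd : ∀ a : A, (∀ b : A, θ a b = 0) → a = 1)
    (T : A → A)
    (hThom : ∀ a b : A, T (a * b) = T a * T b)
    (hT2 : ∀ a : A, T (T a) = a)
    (hTθ : ∀ a b : A, θ (T a) (T b) = - θ a b)
    (a : A) (n : ℕ) (hn : orderOf a = n)
    (hpi : θ a (T a) = (Real.pi : Real.Angle)) :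
    Even n := by
  have hone : ∀ b : A, θ 1 b = 0 := by
    intro b
    have := hbil 1 1 b
    simp at this
    exact this
  have hpow : ∀ k : ℕ, ∀ b : A, θ (a ^ k) b = k • θ a b := by
    intro k
    induction k with
    | zero => intro b; simpa using hone b
    | succ m ih =>
      intro b
      rw [pow_succ, hbil, ih b, succ_nsmul]
  have hzero : (n : ℕ) • θ a (T a) = 0 := by
    rw [← hpow n (T a), ← hn, pow_orderOf_eq_one, hone]
  rw [hpi] at hzero
  by_contra hodd
  rw [Nat.not_even_iff_odd] at hodd
  obtain ⟨k, hk⟩ := hodd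
  rw [hk, add_nsmul, mul_comm, mul_nsmul, one_nsmul] at hzero
  have h2 : (2 : ℕ) • (Real.pi : Real.Angle) = 0 := by
    rw [two_nsmul]
    exact Real.Angle.coe_pi_add_coe_pi
  rw [smul_comm, h2, smul_zero, zero_add] at hzero
  exact Real.Angle.pi_ne_zero (by exact_mod_cast hzero)
end

section
/- Let n and q be integers with q odd, and suppose the following congruences hold for some integers l, l', m: n(l²+1) ≡ 0 (mod q), n·l'² ≡ 0 (mod q), and l² + m·l' − 1 ≡ 0 (mod q). Then n ≡ 0 (mod q). -/
/-- Number-theoretic core of the odd-`q` uniqueness proof: if `q` is odd and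
`q ∣ n(l²+1)`, `q ∣ n·l'²`, `q ∣ l² + m·l' − 1`, then `q ∣ n`. -/
theorem odd_q_twist_vanishes (n q l l' m : ℤ) (hq : Odd q)
    (h1 : q ∣ n * (l ^ 2 + 1))
    (h2 : q ∣ n * l' ^ 2)
    (h3 : q ∣ l ^ 2 + m * l' - 1) :
    q ∣ n := by
  have hA : q ∣ 2 * n - n * m * l' := by
    have h := dvd_sub h1 (h3.mul_left n)
    have e : n * (l ^ 2 + 1) - n * (l ^ 2 + m * l' - 1) = 2 * n - n * m * l' := by ring
    rwa [e] at h
  have hC : q ∣ n * m ^ 2 * l' ^ 2 := by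
    have h := h2.mul_right (m ^ 2)
    have e : n * l' ^ 2 * m ^ 2 = n * m ^ 2 * l' ^ 2 := by ring
    rwa [e] at h
  have hD : q ∣ 2 * n * m * l' := by
    have h := dvd_add (hA.mul_right (m * l')) hC
    have e : (2 * n - n * m * l') * (m * l') + n * m ^ 2 * l' ^ 2 = 2 * n * m * l' := by ring
    rwa [e] at h
  have key : q ∣ 2 ^ 2 * n := by
    have h := dvd_add (hA.mul_left 2) hD
    have e : 2 * (2 * n - n * m * l') + 2 * n * m * l' = 2 ^ 2 * n := by ring
    rwa [e] at h
  have hcop : IsCoprime q (2 : ℤ) := by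
    have h2' : ¬ (2 : ℤ) ∣ q := by
      rcases hq with ⟨k, hk⟩
      intro ⟨j, hj⟩
      omega
    exact ((Int.prime_two.coprime_iff_not_dvd).mpr h2').symm
  exact (hcop.pow_right).dvd_of_dvd_mul_left key
end
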